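/- A nontrivial connected graph G is a prism fixer (i.e., γ(G □ K₂) = γ(G)) if and only if G has a symmetric γ-set. -/
import Mathlib


open SimpleGraph

variable {V : Type*}

/-- `A` dominates `B`: every vertex of `B` is in the closed neighborhood of some vertex of `A`. -/
def Dominates (G : SimpleGraph V) (A B : Set V) : Prop :=
  ∀ b ∈ B, ∃ a ∈ A, a = b ∨ G.Adj a b

/-- `D` is a dominating set of `G`. -/
def IsDomSet (G : SimpleGraph V) (D : Set V) : Prop :=
  Dominates G D Set.univ

/-- The domination number of `G`. -/
noncomputable def domNum (G : SimpleGraph V) : ℕ :=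
  sInf {n | ∃ D : Set V, IsDomSet G D ∧ D.ncard = n}

/-- The prism of `G` with respect to a permutation `π`: two disjoint copies of `G`
joined by the perfect matching `u – π u`. -/
def prism (G : SimpleGraph V) (π : Equiv.Perm V) : SimpleGraph (V ⊕ V) :=
  SimpleGraph.fromRel (fun a b =>
    match a, b with
    | Sum.inl u, Sum.inl v => G.Adj u v
    | Sum.inr u, Sum.inr v => G.Adj u v
    | Sum.inl u, Sum.inr v => v = π u
    | Sum.inr _, Sum.inl _ => False)

/-- `G` is a universal fixer. -/
def IsUniversalFixer (G : SimpleGraph V) : Prop :=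
  ∀ π : Equiv.Perm V, domNum (prism G π) = domNum G

/-- `D` is a γ-set (minimum dominating set) of `G`. -/
def IsGammaSet (G : SimpleGraph V) (D : Set V) : Prop :=
  IsDomSet G D ∧ D.ncard = domNum G

/-- `D = [D₁, D₂]` is a symmetric γ-set of `G`. -/
def IsSymGammaSet (G : SimpleGraph V) (D D1 D2 : Set V) : Prop :=
  IsGammaSet G D ∧ D = D1 ∪ D2 ∧ Disjoint D1 D2 ∧ D1.Nonempty ∧ D2.Nonempty ∧
    Dominates G D1 (Set.univ \ D2) ∧ Dominates G D2 (Set.univ \ D1)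

/-- `S` is a 2-packing: closed neighborhoods of distinct vertices of `S` are disjoint. -/
def IsTwoPacking (G : SimpleGraph V) (S : Set V) : Prop :=
  ∀ x ∈ S, ∀ y ∈ S, x ≠ y →
    Disjoint (insert x (G.neighborSet x)) (insert y (G.neighborSet y))

/-- `D` is an even symmetric γ-set of `G`. -/
def IsEvenSymGammaSet (G : SimpleGraph V) (D : Set V) : Prop :=
  ∃ D1 D2, IsSymGammaSet G D D1 D2 ∧ D1.ncard = D2.ncard
lemma prism_adj_ll {G : SimpleGraph V} {π : Equiv.Perm V} {u v : V} :
    (prism G π).Adj (Sum.inl u) (Sum.inl v) ↔ G.Adj u v := by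
  constructor
  · rintro ⟨-, h | h⟩; exact h; exact h.symm
  · intro h; exact ⟨by simp [h.ne], Or.inl h⟩

lemma prism_adj_rr {G : SimpleGraph V} {π : Equiv.Perm V} {u v : V} :
    (prism G π).Adj (Sum.inr u) (Sum.inr v) ↔ G.Adj u v := by
  constructor
  · rintro ⟨-, h | h⟩; exact h; exact h.symm
  · intro h; exact ⟨by simp [h.ne], Or.inl h⟩

lemma prism_adj_lr {G : SimpleGraph V} {π : Equiv.Perm V} {u v : V} :
    (prism G π).Adj (Sum.inl u) (Sum.inr v) ↔ v = π u := by
  constructor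
  · rintro ⟨-, h | h⟩; exact h; exact h.elim
  · intro h; exact ⟨by simp, Or.inl h⟩

lemma prism_adj_rl {G : SimpleGraph V} {π : Equiv.Perm V} {u v : V} :
    (prism G π).Adj (Sum.inr u) (Sum.inl v) ↔ u = π v := by
  rw [adj_comm, prism_adj_lr]
lemma exists_gammaSet [Fintype V] (G : SimpleGraph V) : ∃ D, IsGammaSet G D := by
  have hne : {n | ∃ D : Set V, IsDomSet G D ∧ D.ncard = n}.Nonempty :=
    ⟨Set.univ.ncard, Set.univ, fun b _ => ⟨b, Set.mem_univ b, Or.inl rfl⟩, rfl⟩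
  obtain ⟨D, hD, hcard⟩ := Nat.sInf_mem hne
  exact ⟨D, hD, hcard⟩

lemma domNum_le [Fintype V] (G : SimpleGraph V) {D : Set V} (hD : IsDomSet G D) :
    domNum G ≤ D.ncard := Nat.sInf_le ⟨D, hD, rfl⟩

lemma ncard_preimage_sum [Fintype V] (D : Set (V ⊕ V)) :
    (Sum.inl ⁻¹' D).ncard + (Sum.inr ⁻¹' D).ncard = D.ncard := by
  have h1 : (Sum.inl ⁻¹' D).ncard = (D ∩ Set.range (Sum.inl : V → V ⊕ V)).ncard := by
    rw [← Set.ncard_image_of_injective _ Sum.inl_injective, Set.image_preimage_eq_inter_range]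
  have h2 : (Sum.inr ⁻¹' D).ncard = (D ∩ Set.range (Sum.inr : V → V ⊕ V)).ncard := by
    rw [← Set.ncard_image_of_injective _ Sum.inr_injective, Set.image_preimage_eq_inter_range]
  rw [h1, h2, ← Set.ncard_union_eq
      (Set.disjoint_of_subset Set.inter_subset_right Set.inter_subset_right
        Set.isCompl_range_inl_range_inr.disjoint) (Set.toFinite _) (Set.toFinite _),
    ← Set.inter_union_distrib_left, Set.range_inl_union_range_inr, Set.inter_univ]

/-- projecting a dominating set of the identity prism gives a dominating set. -/
lemma proj_dom {G : SimpleGraph V} {D : Set (V ⊕ V)}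
    (hD : IsDomSet (prism G (Equiv.refl V)) D) :
    IsDomSet G ((Sum.inl ⁻¹' D) ∪ (Sum.inr ⁻¹' D)) := by
  intro v _
  obtain ⟨a, haD, hav⟩ := hD (Sum.inl v) trivial
  cases a with
  | inl u =>
    refine ⟨u, Or.inl haD, ?_⟩
    rcases hav with h | h
    · exact Or.inl (Sum.inl.inj h)
    · exact Or.inr (prism_adj_ll.mp h)
  | inr u =>
    rcases hav with h | h
    · exact absurd h (by simp)
    · have : u = v := prism_adj_rl.mp h
      subst this
      exact ⟨u, Or.inr haD, Or.inl rfl⟩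

lemma domNum_le_prism [Fintype V] (G : SimpleGraph V) :
    domNum G ≤ domNum (prism G (Equiv.refl V)) := by
  obtain ⟨D, hD, hcard⟩ := exists_gammaSet (prism G (Equiv.refl V))
  calc domNum G ≤ ((Sum.inl ⁻¹' D) ∪ (Sum.inr ⁻¹' D)).ncard := domNum_le G (proj_dom hD)
    _ ≤ (Sum.inl ⁻¹' D).ncard + (Sum.inr ⁻¹' D).ncard := Set.ncard_union_le _ _
    _ = D.ncard := ncard_preimage_sum D
    _ = domNum (prism G (Equiv.refl V)) := hcard

/-- a connected graph on more than one vertex has domination number < card. -/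
lemma domNum_lt_card [Fintype V] (G : SimpleGraph V) (hconn : G.Connected)
    (hn : 1 < Fintype.card V) : domNum G < Fintype.card V := by
  classical
  obtain ⟨v⟩ := hconn.nonempty
  obtain ⟨w, hw⟩ := Fintype.exists_ne_of_one_lt_card hn v
  obtain ⟨p⟩ := hconn.preconnected w v
  have hnil : ¬ p.Nil := SimpleGraph.Walk.not_nil_of_ne hw
  have hadj : G.Adj w (p.getVert 1) := p.adj_snd hnil
  have hdom : IsDomSet G (Set.univ \ {w}) := by
    intro b _
    by_cases hb : b = w
    · exact ⟨(p.getVert 1), ⟨trivial, fun h => hadj.ne' h⟩, Or.inr (hb ▸ hadj.symm)⟩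
    · exact ⟨b, ⟨trivial, hb⟩, Or.inl rfl⟩
  calc domNum G ≤ (Set.univ \ {w}).ncard := domNum_le G hdom
    _ < Fintype.card V := by
        rw [Set.ncard_diff (by simp), Set.ncard_univ, Set.ncard_singleton, Nat.card_eq_fintype_card]
        omega

theorem stmt_8 [Fintype V] (G : SimpleGraph V) (hconn : G.Connected)
    (hn : 1 < Fintype.card V) :
    domNum (prism G (Equiv.refl V)) = domNum G ↔
      ∃ D D1 D2 : Set V, IsSymGammaSet G D D1 D2 := by
  constructor
  · -- forward direction
    intro hfix
    obtain ⟨D', hD'dom, hD'card⟩ := exists_gammaSet (prism G (Equiv.refl V))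
    set D1 : Set V := Sum.inl ⁻¹' D' with hD1def
    set D2 : Set V := Sum.inr ⁻¹' D' with hD2def
    have hsum : D1.ncard + D2.ncard = domNum G := by
      rw [hD1def, hD2def, ncard_preimage_sum, hD'card, hfix]
    have hdomG : IsDomSet G (D1 ∪ D2) := proj_dom hD'dom
    have hge : domNum G ≤ (D1 ∪ D2).ncard := domNum_le G hdomG
    have hle : (D1 ∪ D2).ncard ≤ D1.ncard + D2.ncard := Set.ncard_union_le _ _
    have hcard : (D1 ∪ D2).ncard = domNum G := le_antisymm (hsum ▸ hle) hge
    have hinter : (D1 ∩ D2).ncard = 0 := by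
      have := Set.ncard_union_add_ncard_inter D1 D2 (Set.toFinite _) (Set.toFinite _)
      omega
    have hdisj : Disjoint D1 D2 := by
      rw [Set.disjoint_iff_inter_eq_empty]
      exact (Set.ncard_eq_zero (Set.toFinite _)).mp hinter
    have hlt : domNum G < Fintype.card V := domNum_lt_card G hconn hn
    -- D2 nonempty
    have hne2 : D2.Nonempty := by
      rw [Set.nonempty_iff_ne_empty]
      intro h2
      have h1univ : D1 = Set.univ := by
        ext v
        simp only [Set.mem_univ, iff_true]
        obtain ⟨a, haD, hav⟩ := hD'dom (Sum.inr v) trivial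
        cases a with
        | inl u =>
          rcases hav with h | h
          · exact absurd h (by simp)
          · have : v = u := prism_adj_lr.mp h
            subst this; exact haD
        | inr u =>
          exact absurd haD (by rw [show (Sum.inr u ∈ D') = (u ∈ D2) from rfl, h2]; simp)
      rw [h1univ, h2, Set.ncard_empty, Set.ncard_univ, Nat.card_eq_fintype_card] at hsum
      omega
    have hne1 : D1.Nonempty := by
      rw [Set.nonempty_iff_ne_empty]
      intro h1
      have h2univ : D2 = Set.univ := by
        ext v
        simp only [Set.mem_univ, iff_true]
        obtain ⟨a, haD, hav⟩ := hD'dom (Sum.inl v) trivial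
        cases a with
        | inl u =>
          exact absurd haD (by rw [show (Sum.inl u ∈ D') = (u ∈ D1) from rfl, h1]; simp)
        | inr u =>
          rcases hav with h | h
          · exact absurd h (by simp)
          · have : u = v := prism_adj_rl.mp h
            subst this; exact haD
      rw [h2univ, h1, Set.ncard_empty, Set.ncard_univ, Nat.card_eq_fintype_card] at hsum
      omega
    refine ⟨D1 ∪ D2, D1, D2, ⟨hdomG, hcard⟩, rfl, hdisj, hne1, hne2, ?_, ?_⟩
    · -- D1 dominates univ \ D2
      rintro v ⟨-, hv2⟩
      obtain ⟨a, haD, hav⟩ := hD'dom (Sum.inl v) trivial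
      cases a with
      | inl u =>
        refine ⟨u, haD, ?_⟩
        rcases hav with h | h
        · exact Or.inl (Sum.inl.inj h)
        · exact Or.inr (prism_adj_ll.mp h)
      | inr u =>
        rcases hav with h | h
        · exact absurd h (by simp)
        · have : u = v := prism_adj_rl.mp h
          exact absurd (this ▸ haD) hv2
    · -- D2 dominates univ \ D1
      rintro v ⟨-, hv1⟩
      obtain ⟨a, haD, hav⟩ := hD'dom (Sum.inr v) trivial
      cases a with
      | inl u =>
        rcases hav with h | h
        · exact absurd h (by simp)
        · have : v = u := prism_adj_lr.mp h
          exact absurd (this ▸ haD) hv1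
      | inr u =>
        refine ⟨u, haD, ?_⟩
        rcases hav with h | h
        · exact Or.inl (Sum.inr.inj h)
        · exact Or.inr (prism_adj_rr.mp h)
  · -- reverse direction
    rintro ⟨D, D1, D2, ⟨⟨hDdom, hDcard⟩, hDeq, hdisj, hne1, hne2, hdom1, hdom2⟩⟩
    refine le_antisymm ?_ (domNum_le_prism G)
    have hdom' : IsDomSet (prism G (Equiv.refl V)) (Sum.inl '' D1 ∪ Sum.inr '' D2) := by
      rintro (v | v) -
      · by_cases hv : v ∈ D2
        · exact ⟨Sum.inr v, Or.inr ⟨v, hv, rfl⟩, Or.inr (prism_adj_rl.mpr rfl)⟩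
        · obtain ⟨a, ha, hav⟩ := hdom1 v ⟨trivial, hv⟩
          exact ⟨Sum.inl a, Or.inl ⟨a, ha, rfl⟩,
            hav.imp (congrArg Sum.inl) prism_adj_ll.mpr⟩
      · by_cases hv : v ∈ D1
        · exact ⟨Sum.inl v, Or.inl ⟨v, hv, rfl⟩, Or.inr (prism_adj_lr.mpr rfl)⟩
        · obtain ⟨a, ha, hav⟩ := hdom2 v ⟨trivial, hv⟩
          exact ⟨Sum.inr a, Or.inr ⟨a, ha, rfl⟩,
            hav.imp (congrArg Sum.inr) prism_adj_rr.mpr⟩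
    calc domNum (prism G (Equiv.refl V)) ≤ (Sum.inl '' D1 ∪ Sum.inr '' D2).ncard :=
          domNum_le _ hdom'
      _ = (Sum.inl '' D1).ncard + (Sum.inr '' D2).ncard := by
          apply Set.ncard_union_eq ?_ (Set.toFinite _) (Set.toFinite _)
          exact Set.disjoint_of_subset (Set.image_subset_range _ _)
            (Set.image_subset_range _ _) Set.isCompl_range_inl_range_inr.disjoint
      _ = D1.ncard + D2.ncard := by
          rw [Set.ncard_image_of_injective _ Sum.inl_injective,
            Set.ncard_image_of_injective _ Sum.inr_injective]
      _ = D.ncard := by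
          rw [hDeq, Set.ncard_union_eq hdisj (Set.toFinite _) (Set.toFinite _)]
      _ = domNum G := hDcard
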